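/- Let N = p₁⋯pₙ be a product of distinct primes with deg P_N < N, fix an index i, and let 0 < k < N_i = N/p_i be an integer such that k·N_i⁻¹ is not congruent modulo p_i to ∑_{j∈T}(p_j⁻¹ mod p_i) for any subset T ⊆ {1,…,n}\{i}. Then the coefficient of x^k in P_N(x) is zero. -/

import Mathlib

open Polynomial Finset

namespace Stmt16Aux

/-- The formal inverse of `1 - X^m`: the geometric series `∑_{m ∣ e} X^e`. -/
noncomputable def g (m : ℕ) : PowerSeries ℤ :=
  PowerSeries.mk fun e => if m ∣ e then 1 else 0

lemma coeff_g (m e : ℕ) : PowerSeries.coeff (R := ℤ) e (g m) = if m ∣ e then 1 else 0 := by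
  simp [g]

lemma g_inv (m : ℕ) (hm : m ≠ 0) : (1 - PowerSeries.X ^ m) * g m = 1 := by
  have h : (1 - PowerSeries.X ^ m) * g m = g m - g m * PowerSeries.X ^ m := by ring
  rw [h]
  ext e
  rw [map_sub, PowerSeries.coeff_mul_X_pow']
  simp only [coeff_g, PowerSeries.coeff_one]
  rcases eq_or_ne e 0 with rfl | he
  · have : ¬ m ≤ 0 := by omega
    simp [this]
  · rw [if_neg he]
    by_cases hd : m ∣ e
    · have hle : m ≤ e := Nat.le_of_dvd (Nat.pos_of_ne_zero he) hd
      rw [if_pos hd, if_pos hle, if_pos (Nat.dvd_sub hd dvd_rfl)]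
      ring
    · rw [if_neg hd]
      by_cases hle : m ≤ e
      · rw [if_pos hle, if_neg ?_]
        · ring
        · intro hdd
          exact hd (by have := Nat.dvd_add hdd (dvd_refl m); rwa [Nat.sub_add_cancel hle] at this)
      · rw [if_neg hle]; ring

lemma supp_prod_one_sub {ι : Type*} [DecidableEq ι] (s : Finset ι) (d : ι → ℕ) :
    ∀ e : ℕ, PowerSeries.coeff (R := ℤ) e (∏ l ∈ s, (1 - PowerSeries.X ^ d l)) ≠ 0 →
      ∃ T ⊆ s, e = ∑ l ∈ T, d l := by
  induction s using Finset.induction_on with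
  | empty =>
      intro e he
      rw [Finset.prod_empty, PowerSeries.coeff_one] at he
      refine ⟨∅, Finset.Subset.refl _, ?_⟩
      rw [Finset.sum_empty]
      by_contra h
      exact he (if_neg h)
  | @insert a s hx ih =>
      intro e he
      rw [Finset.prod_insert hx, PowerSeries.coeff_mul] at he
      obtain ⟨z, hz, hne⟩ := Finset.exists_ne_zero_of_sum_ne_zero he
      have hzsum : z.1 + z.2 = e := Finset.HasAntidiagonal.mem_antidiagonal.mp hz
      have h1 : PowerSeries.coeff (R := ℤ) z.1 (1 - PowerSeries.X ^ d a) ≠ 0 :=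
        fun h => hne (by rw [h, zero_mul])
      have h2 : PowerSeries.coeff (R := ℤ) z.2 (∏ l ∈ s, (1 - PowerSeries.X ^ d l)) ≠ 0 :=
        fun h => hne (by rw [h, mul_zero])
      obtain ⟨T, hTs, hTe⟩ := ih z.2 h2
      have hz1 : z.1 = 0 ∨ z.1 = d a := by
        by_contra h
        push_neg at h
        exact h1 (by simp [map_sub, PowerSeries.coeff_one, PowerSeries.coeff_X_pow, h.1, h.2])
      rcases hz1 with h0 | hda
      · exact ⟨T, hTs.trans (Finset.subset_insert _ _), by omega⟩
      · have haT : a ∉ T := fun h => hx (hTs h)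
        refine ⟨insert a T, Finset.insert_subset_insert _ hTs, ?_⟩
        rw [Finset.sum_insert haT]
        omega

lemma supp_prod_dvd {ι : Type*} (q : ℕ) (s : Finset ι) (f : ι → PowerSeries ℤ)
    (h : ∀ j ∈ s, ∀ e, PowerSeries.coeff (R := ℤ) e (f j) ≠ 0 → q ∣ e) :
    ∀ e, PowerSeries.coeff (R := ℤ) e (∏ j ∈ s, f j) ≠ 0 → q ∣ e := by
  classical
  induction s using Finset.induction_on with
  | empty =>
      intro e he
      rw [Finset.prod_empty, PowerSeries.coeff_one] at he
      have : e = 0 := by by_contra h0; exact he (if_neg h0)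
      simp [this]
  | @insert a s hx ih =>
      intro e he
      rw [Finset.prod_insert hx, PowerSeries.coeff_mul] at he
      obtain ⟨z, hz, hne⟩ := Finset.exists_ne_zero_of_sum_ne_zero he
      have hzsum : z.1 + z.2 = e := Finset.HasAntidiagonal.mem_antidiagonal.mp hz
      have h1 : q ∣ z.1 :=
        h a (Finset.mem_insert_self _ _) z.1 (fun h' => hne (by rw [h', zero_mul]))
      have h2 : q ∣ z.2 :=
        ih (fun j hj => h j (Finset.mem_insert_of_mem hj)) z.2
          (fun h' => hne (by rw [h', mul_zero]))
      rw [← hzsum]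
      exact Nat.dvd_add h1 h2

end Stmt16Aux

open Stmt16Aux

/-- Let `N = p₁⋯pₙ` be a product of distinct primes with `deg P_N < N`, fix an
index `i`, and let `0 < k < N_i = N/p_i` be such that `k·N_i⁻¹` is not
congruent modulo `p_i` to `∑_{j∈T}(p_j⁻¹ mod p_i)` for any
`T ⊆ [n]\{i}`. Then the coefficient of `x^k` in `P_N(x)` is zero. -/
theorem stmt16 (n : ℕ) (p : Fin n → ℕ)
    (hp : ∀ k, (p k).Prime) (hinj : Function.Injective p)
    (N : ℕ) (hN : N = ∏ k, p k)
    (PN : Polynomial ℤ)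
    (hPN : PN * ∏ k, (1 - X ^ (N / p k)) =
      (1 - X ^ N) * ∏ k, ∏ l ∈ Finset.Ioi k, (1 - X ^ (N / (p k * p l))))
    (hdeg : PN.natDegree < N)
    (i : Fin n) (k : ℕ) (hk0 : 0 < k) (hk1 : k < N / p i)
    (hcong : ∀ T ∈ (Finset.univ.erase i : Finset (Fin n)).powerset,
      (k : ZMod (p i)) * ((N / p i : ℕ) : ZMod (p i))⁻¹ ≠
        ∑ j ∈ T, (p j : ZMod (p i))⁻¹) :
    PN.coeff k = 0 := by
  classical
  have hq : (p i).Prime := hp i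
  haveI : Fact (p i).Prime := ⟨hq⟩
  have hppos : ∀ j, 0 < p j := fun j => (hp j).pos
  -- `N / p j` as a product over the erased set
  have hNdiv : ∀ j : Fin n, N / p j = ∏ m ∈ univ.erase j, p m := by
    intro j
    have h1 : N = p j * ∏ m ∈ univ.erase j, p m := by
      rw [hN, Finset.mul_prod_erase univ p (mem_univ j)]
    rw [h1, Nat.mul_div_cancel_left _ (hppos j)]
  have hNdiv2 : ∀ a b : Fin n, a ≠ b →
      N / (p a * p b) = ∏ m ∈ (univ.erase a).erase b, p m := by
    intro a b hab
    have hb : b ∈ univ.erase a := Finset.mem_erase.mpr ⟨hab.symm, mem_univ b⟩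
    have h1 : N = p a * p b * ∏ m ∈ (univ.erase a).erase b, p m := by
      rw [hN, ← Finset.mul_prod_erase univ p (mem_univ a),
        ← Finset.mul_prod_erase (univ.erase a) p hb, mul_assoc]
    rw [h1, Nat.mul_div_cancel_left _ (Nat.mul_pos (hppos a) (hppos b))]
  have hNjpos : ∀ j : Fin n, 0 < N / p j := by
    intro j
    rw [hNdiv j]
    exact Finset.prod_pos fun m _ => hppos m
  -- divisibility facts
  have hdvd1 : ∀ j : Fin n, j ≠ i → p i ∣ N / p j := by
    intro j hj
    rw [hNdiv j]
    exact Finset.dvd_prod_of_mem p (Finset.mem_erase.mpr ⟨Ne.symm hj, mem_univ i⟩)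
  have hdvd2 : ∀ a b : Fin n, a ≠ b → a ≠ i → b ≠ i → p i ∣ N / (p a * p b) := by
    intro a b hab ha hb
    rw [hNdiv2 a b hab]
    exact Finset.dvd_prod_of_mem p
      (Finset.mem_erase.mpr ⟨hb.symm, Finset.mem_erase.mpr ⟨ha.symm, mem_univ i⟩⟩)
  have hndvd : ¬ p i ∣ N / p i := by
    rw [hNdiv i]
    intro hd
    obtain ⟨j, hj, hdj⟩ := (hq.prime.dvd_finset_prod_iff p).mp hd
    have : p i = p j := (Nat.prime_dvd_prime_iff_eq hq (hp j)).mp hdj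
    exact (Finset.mem_erase.mp hj).1 (hinj this).symm
  have hNi_ne : ((N / p i : ℕ) : ZMod (p i)) ≠ 0 := by
    rw [Ne, ZMod.natCast_eq_zero_iff]
    exact hndvd
  -- coerce the polynomial identity to power series
  have hPS : (PN : PowerSeries ℤ) * ∏ j : Fin n, (1 - PowerSeries.X ^ (N / p j)) =
      (1 - PowerSeries.X ^ N) *
        ∏ j : Fin n, ∏ l ∈ Finset.Ioi j, (1 - PowerSeries.X ^ (N / (p j * p l))) := by
    have h := congrArg (Polynomial.coeToPowerSeries.ringHom (R := ℤ)) hPN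
    simpa only [map_mul, map_prod, map_sub, map_one, map_pow,
      Polynomial.coeToPowerSeries.ringHom_apply, Polynomial.coe_X] using h
  set Grest : PowerSeries ℤ := ∏ j ∈ univ.erase i, g (N / p j) with hGrest
  set Dps : PowerSeries ℤ :=
    ∏ j : Fin n, ∏ l ∈ Finset.Ioi j, (1 - PowerSeries.X ^ (N / (p j * p l))) with hDps
  have hinvall : (∏ j : Fin n, (1 - PowerSeries.X ^ (N / p j))) *
      (∏ j : Fin n, g (N / p j)) = 1 := by
    rw [← Finset.prod_mul_distrib]
    exact Finset.prod_eq_one fun j _ => g_inv _ (hNjpos j).ne'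
  have hPN_eq : (PN : PowerSeries ℤ) =
      (1 - PowerSeries.X ^ N) * Dps * (g (N / p i) * Grest) := by
    have h1 : (PN : PowerSeries ℤ) =
        (1 - PowerSeries.X ^ N) * Dps * ∏ j : Fin n, g (N / p j) := by
      calc (PN : PowerSeries ℤ)
          = (PN : PowerSeries ℤ) * ((∏ j : Fin n, (1 - PowerSeries.X ^ (N / p j))) *
            (∏ j : Fin n, g (N / p j))) := by rw [hinvall, mul_one]
        _ = ((PN : PowerSeries ℤ) * ∏ j : Fin n, (1 - PowerSeries.X ^ (N / p j))) *
            (∏ j : Fin n, g (N / p j)) := by ring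
        _ = (1 - PowerSeries.X ^ N) * Dps * ∏ j : Fin n, g (N / p j) := by rw [hPS]
    rw [h1, Finset.mul_prod_erase univ (fun j => g (N / p j)) (mem_univ i)]
  have hgeom : (1 - PowerSeries.X ^ N) * g (N / p i) =
      ∑ t ∈ Finset.range (p i), (PowerSeries.X ^ (N / p i) : PowerSeries ℤ) ^ t := by
    have hNi : (N / p i) * p i = N :=
      Nat.div_mul_cancel (hN ▸ Finset.dvd_prod_of_mem p (mem_univ i))
    have h1 : (1 - PowerSeries.X ^ N : PowerSeries ℤ) =
        (1 - PowerSeries.X ^ (N / p i)) *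
          ∑ t ∈ Finset.range (p i), (PowerSeries.X ^ (N / p i) : PowerSeries ℤ) ^ t := by
      have h := geom_sum_mul (PowerSeries.X ^ (N / p i) : PowerSeries ℤ) (p i)
      rw [← pow_mul, hNi] at h
      linear_combination h
    rw [h1, mul_right_comm, g_inv _ (hNjpos i).ne', one_mul]
  have hPN2 : (PN : PowerSeries ℤ) =
      (∑ t ∈ Finset.range (p i), (PowerSeries.X ^ (N / p i) : PowerSeries ℤ) ^ t) *
        (Dps * Grest) := by
    rw [hPN_eq, ← hgeom]; ring
  -- extract the coefficient
  have hco : PN.coeff k = PowerSeries.coeff (R := ℤ) k (Dps * Grest) := by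
    rw [← Polynomial.coeff_coe, hPN2, Finset.sum_mul, map_sum]
    rw [Finset.sum_eq_single 0]
    · rw [pow_zero, one_mul]
    · intro t ht ht0
      rw [← pow_mul, mul_comm, PowerSeries.coeff_mul_X_pow']
      rw [if_neg ?_]
      have h1 : N / p i ≤ N / p i * t := Nat.le_mul_of_pos_right _ (Nat.pos_of_ne_zero ht0)
      omega
    · intro h
      exact absurd (Finset.mem_range.mpr hq.pos) h
  rw [hco]
  by_contra hne
  rw [PowerSeries.coeff_mul] at hne
  obtain ⟨z, hz, hzne⟩ := Finset.exists_ne_zero_of_sum_ne_zero hne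
  have hzsum : z.1 + z.2 = k := Finset.HasAntidiagonal.mem_antidiagonal.mp hz
  have ha : PowerSeries.coeff (R := ℤ) z.1 Dps ≠ 0 := fun h => hzne (by rw [h, zero_mul])
  have hb : PowerSeries.coeff (R := ℤ) z.2 Grest ≠ 0 := fun h => hzne (by rw [h, mul_zero])
  -- the second factor contributes only multiples of `p i`
  have hbdvd : p i ∣ z.2 := by
    refine supp_prod_dvd (p i) (univ.erase i) _ ?_ z.2 hb
    intro j hj e he
    rw [coeff_g] at he
    have hd : N / p j ∣ e := by by_contra h; exact he (if_neg h)
    exact dvd_trans (hdvd1 j (Finset.mem_erase.mp hj).1) hd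
  -- the first factor contributes subset sums
  have hsig : Dps = ∏ z ∈ (univ : Finset (Fin n)).sigma (fun j => Finset.Ioi j),
      (1 - PowerSeries.X ^ (N / (p z.1 * p z.2))) := by
    rw [Finset.prod_sigma]
  rw [hsig] at ha
  obtain ⟨T, hTsub, hTa⟩ :=
    supp_prod_one_sub _ (fun z : Σ _ : Fin n, Fin n => N / (p z.1 * p z.2)) z.1 ha
  have hTlt : ∀ w ∈ T, w.1 < w.2 := by
    intro w hw
    have := hTsub hw
    rw [Finset.mem_sigma] at this
    exact Finset.mem_Ioi.mp this.2
  -- pass to residues mod p i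
  set el : (Σ _ : Fin n, Fin n) → Fin n := fun w => if w.1 = i then w.2 else w.1 with hel
  set T' : Finset (Fin n) := (T.filter (fun w => w.1 = i ∨ w.2 = i)).image el with hT'
  have hT'sub : T' ⊆ univ.erase i := by
    intro j hj
    rw [hT', Finset.mem_image] at hj
    obtain ⟨w, hw, rfl⟩ := hj
    rw [Finset.mem_filter] at hw
    have hlt := hTlt w hw.1
    refine Finset.mem_erase.mpr ⟨?_, mem_univ _⟩
    by_cases h1 : w.1 = i
    · rw [hel]; simp only [h1, if_pos]
      intro h2
      rw [h1, h2] at hlt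
      exact lt_irrefl _ hlt
    · rw [hel]; simp only [if_neg h1]
      exact h1
  have hk_mod : (k : ZMod (p i)) = (z.1 : ZMod (p i)) := by
    have h2 : ((z.2 : ℕ) : ZMod (p i)) = 0 :=
      (ZMod.natCast_eq_zero_iff _ _).mpr hbdvd
    rw [← hzsum]
    push_cast
    rw [h2, add_zero]
  have ha_mod : ((z.1 : ℕ) : ZMod (p i)) =
      ∑ w ∈ T, ((N / (p w.1 * p w.2) : ℕ) : ZMod (p i)) := by
    rw [hTa]
    push_cast
    rfl
  have hsum : ∑ w ∈ T, ((N / (p w.1 * p w.2) : ℕ) : ZMod (p i)) =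
      ∑ j ∈ T', ((N / (p i * p j) : ℕ) : ZMod (p i)) := by
    rw [← Finset.sum_filter_add_sum_filter_not T (fun w => w.1 = i ∨ w.2 = i)]
    have hzero : ∑ w ∈ T.filter (fun w => ¬(w.1 = i ∨ w.2 = i)),
        ((N / (p w.1 * p w.2) : ℕ) : ZMod (p i)) = 0 := by
      refine Finset.sum_eq_zero ?_
      intro w hw
      rw [Finset.mem_filter] at hw
      push_neg at hw
      have hlt := hTlt w hw.1
      rw [ZMod.natCast_eq_zero_iff]
      exact hdvd2 w.1 w.2 hlt.ne hw.2.1 hw.2.2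
    rw [hzero, add_zero, hT']
    rw [Finset.sum_image ?_]
    · refine Finset.sum_congr rfl ?_
      intro w hw
      rw [Finset.mem_filter] at hw
      by_cases h1 : w.1 = i
      · rw [hel]; simp only [h1, if_pos]
      · have h2 : w.2 = i := hw.2.resolve_left h1
        rw [hel]; simp only [if_neg h1]
        rw [h2, mul_comm (p w.1) (p i)]
    · intro x hx y hy hxy
      rw [Finset.mem_coe, Finset.mem_filter] at hx hy
      have hxl := hTlt x hx.1
      have hyl := hTlt y hy.1
      rw [hel] at hxy
      simp only at hxy
      by_cases h1 : x.1 = i <;> by_cases h2 : y.1 = i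
      · rw [if_pos h1, if_pos h2] at hxy
        cases x; cases y
        simp_all
      · rw [if_pos h1, if_neg h2] at hxy
        have hy2 : y.2 = i := hy.2.resolve_left h2
        exfalso
        rw [h1] at hxl
        rw [hy2] at hyl
        rw [hxy] at hxl
        exact lt_asymm hxl hyl
      · rw [if_neg h1, if_pos h2] at hxy
        have hx2 : x.2 = i := hx.2.resolve_left h1
        exfalso
        rw [h2] at hyl
        rw [hx2] at hxl
        rw [← hxy] at hyl
        exact lt_asymm hxl hyl
      · rw [if_neg h1, if_neg h2] at hxy
        have hx2 : x.2 = i := hx.2.resolve_left h1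
        have hy2 : y.2 = i := hy.2.resolve_left h2
        cases x; cases y
        simp_all
  -- per-term identity
  have hterm : ∀ j : Fin n, j ≠ i → ((N / (p i * p j) : ℕ) : ZMod (p i)) =
      ((N / p i : ℕ) : ZMod (p i)) * ((p j : ℕ) : ZMod (p i))⁻¹ := by
    intro j hji
    have hpj_ne : ((p j : ℕ) : ZMod (p i)) ≠ 0 := by
      rw [Ne, ZMod.natCast_eq_zero_iff]
      intro hdj
      exact hji (hinj ((Nat.prime_dvd_prime_iff_eq hq (hp j)).mp hdj)).symm
    have hmulnat : (N / (p i * p j)) * p j = N / p i := by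
      rw [hNdiv2 i j hji.symm, hNdiv i,
        ← Finset.mul_prod_erase (univ.erase i) p (Finset.mem_erase.mpr ⟨hji, mem_univ j⟩)]
      ring
    have hc := congrArg (Nat.cast : ℕ → ZMod (p i)) hmulnat
    push_cast at hc
    rw [← hc, mul_assoc, mul_inv_cancel₀ hpj_ne, mul_one]
  refine hcong T' (Finset.mem_powerset.mpr hT'sub) ?_
  have hkey : (k : ZMod (p i)) = ∑ j ∈ T', ((N / (p i * p j) : ℕ) : ZMod (p i)) := by
    rw [hk_mod, ha_mod, hsum]
  rw [hkey, Finset.sum_mul]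
  refine Finset.sum_congr rfl ?_
  intro j hj
  have hji : j ≠ i := (Finset.mem_erase.mp (hT'sub hj)).1
  rw [hterm j hji, mul_right_comm, mul_inv_cancel₀ hNi_ne, one_mul]
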